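/- Let X ∈ ℝ^{n×p}, λ > 0, and let γ̂ ∈ ℝ^{p−1} be a node-wise Lasso solution with τ̃² := (1/n)‖X₁ − X₋₁γ̂‖² > 0; set τ̂² := τ̃² + λ‖γ̂‖₁, Θ̂₁ := (1/τ̂²)(1, −γ̂ᵀ)ᵀ, Σ̂ := XᵀX/n, and Ω̂₁,₁ := Θ̂₁ᵀΣ̂Θ̂₁. Then the bias factor f := ‖Σ̂Θ̂₁ − e₁‖_∞ / Ω̂₁,₁^{1/2} satisfies f ≤ λ/τ̃, where τ̃ = √(τ̃²). -/

import Mathlib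

open MeasureTheory ProbabilityTheory Filter Finset Matrix Topology

noncomputable section

/-- Squared Euclidean norm of a vector in `ℝ^m`. -/
def sqNorm {m : ℕ} (v : Fin m → ℝ) : ℝ := ∑ i, (v i) ^ 2

/-- ℓ¹ norm of a vector in `ℝ^m`. -/
def l1Norm {m : ℕ} (v : Fin m → ℝ) : ℝ := ∑ i, |v i|

/-- ℓ^∞ norm (maximum absolute entry) of a vector in `ℝ^m`. -/
def supNorm {m : ℕ} (v : Fin m → ℝ) : ℝ := ⨆ i, |v i|

/-- First entry of a vector (0 if the vector is empty). -/
def fstEntry {P : ℕ} (v : Fin P → ℝ) : ℝ := if h : 0 < P then v ⟨0, h⟩ else 0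

/-- Index of the (j+2)-nd column, as an element of `Fin P`, for `j : Fin (P-1)`. -/
def colIdx {P : ℕ} (j : Fin (P - 1)) : Fin P := ⟨j.1 + 1, by have := j.isLt; omega⟩

/-- First column of the design matrix `X` (rows indexed by `Fin n`, columns by `Fin P`). -/
def col0 {n P : ℕ} (X : Fin n → Fin P → ℝ) : Fin n → ℝ := fun i => fstEntry (X i)

/-- Residual `X₁ - X₋₁ γ` of the node-wise regression of the first column on the others. -/
def nwRes {n P : ℕ} (X : Fin n → Fin P → ℝ) (g : Fin (P - 1) → ℝ) : Fin n → ℝ :=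
  fun i => col0 X i - ∑ j : Fin (P - 1), X i (colIdx j) * g j

/-- Node-wise Lasso objective `(1/n)‖X₁ - X₋₁γ‖² + 2λ‖γ‖₁`. -/
def nwObj {n P : ℕ} (X : Fin n → Fin P → ℝ) (lam : ℝ) (g : Fin (P - 1) → ℝ) : ℝ :=
  (1 / n) * sqNorm (nwRes X g) + 2 * lam * l1Norm g

/-- `g` is a node-wise Lasso solution with tuning parameter `lam`. -/
def IsNodewiseSol {n P : ℕ} (X : Fin n → Fin P → ℝ) (lam : ℝ) (g : Fin (P - 1) → ℝ) : Prop :=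
  ∀ γ : Fin (P - 1) → ℝ, nwObj X lam g ≤ nwObj X lam γ

/-- `τ̃² := (1/n)‖X₁ - X₋₁γ̂‖²`. -/
def tauTildeSq {n P : ℕ} (X : Fin n → Fin P → ℝ) (g : Fin (P - 1) → ℝ) : ℝ :=
  (1 / n) * sqNorm (nwRes X g)

/-- `τ̂² := τ̃² + λ‖γ̂‖₁`. -/
def tauHatSq {n P : ℕ} (X : Fin n → Fin P → ℝ) (lam : ℝ) (g : Fin (P - 1) → ℝ) : ℝ :=
  tauTildeSq X g + lam * l1Norm g

/-- `Θ̂₁ := (1/τ̂²)(1, -γ̂ᵀ)ᵀ ∈ ℝ^P`. -/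
def thetaHat {n P : ℕ} (X : Fin n → Fin P → ℝ) (lam : ℝ) (g : Fin (P - 1) → ℝ) :
    Fin P → ℝ :=
  fun j =>
    if h : j.1 = 0 then 1 / tauHatSq X lam g
    else -(g ⟨j.1 - 1, by have := j.isLt; omega⟩) / tauHatSq X lam g

/-- Sample covariance matrix `Σ̂ := XᵀX/n`. -/
def sigmaHat {n P : ℕ} (X : Fin n → Fin P → ℝ) : Fin P → Fin P → ℝ :=
  fun j k => (1 / n) * ∑ i, X i j * X i k

/-- The vector `Σ̂Θ̂₁ - e₁`. -/
def biasVec {n P : ℕ} (X : Fin n → Fin P → ℝ) (lam : ℝ) (g : Fin (P - 1) → ℝ) :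
    Fin P → ℝ :=
  fun j => (∑ k, sigmaHat X j k * thetaHat X lam g k) - (if j.1 = 0 then 1 else 0)

/-- `Ω̂₁,₁ := Θ̂₁ᵀ Σ̂ Θ̂₁`. -/
def omegaHat {n P : ℕ} (X : Fin n → Fin P → ℝ) (lam : ℝ) (g : Fin (P - 1) → ℝ) : ℝ :=
  ∑ j, ∑ k, thetaHat X lam g j * sigmaHat X j k * thetaHat X lam g k

/-- Bias factor `f(λ) := ‖Σ̂Θ̂₁ - e₁‖_∞ / Ω̂₁,₁^{1/2}`. -/
def biasFactor {n P : ℕ} (X : Fin n → Fin P → ℝ) (lam : ℝ) (g : Fin (P - 1) → ℝ) : ℝ :=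
  supNorm (biasVec X lam g) / Real.sqrt (omegaHat X lam g)

/-- Restricted maximum eigenvalue `φ_max(s)` of the sample covariance of `X`. -/
def phiMax {n P : ℕ} (X : Fin n → Fin P → ℝ) (s : ℕ) : ℝ :=
  sSup {r : ℝ | ∃ z : Fin P → ℝ, z ≠ 0 ∧ {j : Fin P | z j ≠ 0}.ncard ≤ s ∧
    r = sqNorm (fun i => ∑ j, X i j * z j) / (n * sqNorm z)}

/-- Restricted minimum eigenvalue `φ_min(s)` of the sample covariance of `X`. -/
def phiMin {n P : ℕ} (X : Fin n → Fin P → ℝ) (s : ℕ) : ℝ :=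
  sInf {r : ℝ | ∃ z : Fin P → ℝ, z ≠ 0 ∧ {j : Fin P | z j ≠ 0}.ncard ≤ s ∧
    r = sqNorm (fun i => ∑ j, X i j * z j) / (n * sqNorm z)}

/-- Restricted eigenvalue `κ(s,c₀)²` of Bickel–Ritov–Tsybakov. -/
def kappaSq {n P : ℕ} (X : Fin n → Fin P → ℝ) (s : ℕ) (c0 : ℝ) : ℝ :=
  sInf {r : ℝ | ∃ S : Finset (Fin P), S.card ≤ s ∧ ∃ z : Fin P → ℝ, z ≠ 0 ∧
    (∑ j ∈ Sᶜ, |z j|) ≤ c0 * ∑ j ∈ S, |z j| ∧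
    r = sqNorm (fun i => ∑ j, X i j * z j) / (n * ∑ j ∈ S, (z j) ^ 2)}

/-- The columns of `X` are in general position. -/
def InGeneralPosition {n P : ℕ} (X : Fin n → Fin P → ℝ) : Prop :=
  ∀ k : ℕ, k < min n P → ∀ ι : Fin (k + 1) → Fin P, Function.Injective ι →
    ∀ σ : Fin (k + 1) → ℝ, (∀ l, σ l = 1 ∨ σ l = -1) →
      ∀ i : Fin P, i ∉ Set.range ι → ∀ s : ℝ, s = 1 ∨ s = -1 →
        (s • fun r => X r i) ∉
          affineSpan ℝ (Set.range fun l => σ l • fun r => X r (ι l))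

/-- `b` is a Lasso solution for response `Y`, design `X`, tuning parameter `lam`. -/
def IsLassoSol {n P : ℕ} (X : Fin n → Fin P → ℝ) (Y : Fin n → ℝ) (lam : ℝ)
    (b : Fin P → ℝ) : Prop :=
  ∀ β : Fin P → ℝ,
    (1 / n) * sqNorm (fun i => Y i - ∑ j, X i j * b j) + 2 * lam * l1Norm b ≤
      (1 / n) * sqNorm (fun i => Y i - ∑ j, X i j * β j) + 2 * lam * l1Norm β

/-- The debiased Lasso `b̂₁ := β̂₁ + (1/n)Θ̂₁ᵀXᵀ(Y - Xβ̂)`. -/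
def debiasedLasso {n P : ℕ} (X : Fin n → Fin P → ℝ) (Y : Fin n → ℝ)
    (Theta : Fin P → ℝ) (bh : Fin P → ℝ) : ℝ :=
  fstEntry bh + (1 / n) * ∑ j, Theta j * ∑ i, X i j * (Y i - ∑ k, X i k * bh k)

/-- `W₁ := (1/√n)Θ̂₁ᵀXᵀε`. -/
def W1 {n P : ℕ} (X : Fin n → Fin P → ℝ) (Theta : Fin P → ℝ) (e : Fin n → ℝ) : ℝ :=
  (1 / Real.sqrt n) * ∑ j, Theta j * ∑ i, X i j * e i

/-- `Δ₁ := √n (Σ̂Θ̂₁ - e₁)ᵀ(β₀ - β̂)`. -/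
def Delta1 {n P : ℕ} (X : Fin n → Fin P → ℝ) (Theta : Fin P → ℝ)
    (b0 bh : Fin P → ℝ) : ℝ :=
  Real.sqrt n * ∑ j, ((∑ k, sigmaHat X j k * Theta k) - (if j.1 = 0 then 1 else 0)) *
    (b0 j - bh j)

/-- Standard normal cumulative distribution function. -/
def gaussCdf (z : ℝ) : ℝ := ((gaussianReal 0 1) (Set.Iic z)).toReal


lemma sum_split {p : ℕ} (hp : 2 ≤ p) (f : Fin p → ℝ) :
    ∑ k, f k = f ⟨0, by omega⟩ + ∑ j : Fin (p - 1), f (colIdx j) := by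
  have h0 : 0 < p := by omega
  set F : ℕ → ℝ := fun m => if h : m < p then f ⟨m, h⟩ else 0 with hF
  have h1 : ∑ k : Fin p, f k = ∑ m ∈ Finset.range p, F m := by
    rw [← Fin.sum_univ_eq_sum_range]
    exact Finset.sum_congr rfl fun k _ => by simp [hF, k.isLt]
  have hps : p = (p - 1) + 1 := by omega
  rw [h1, show Finset.range p = Finset.range ((p - 1) + 1) from by rw [← hps], Finset.sum_range_succ']
  have h2 : ∑ m ∈ Finset.range (p - 1), F (m + 1) = ∑ j : Fin (p - 1), f (colIdx j) := by
    rw [← Fin.sum_univ_eq_sum_range (fun m => F (m + 1))]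
    refine Finset.sum_congr rfl fun j _ => ?_
    have : j.1 + 1 < p := by have := j.isLt; omega
    simp [hF, this, colIdx]
  rw [h2]
  have : F 0 = f ⟨0, by omega⟩ := by simp [hF, h0]
  rw [this]; ring

lemma small_t_lemma (A B : ℝ) (hB : 0 ≤ B)
    (h : ∀ t : ℝ, 0 < t → t < 1 → 0 ≤ t * A + t ^ 2 * B) : 0 ≤ A := by
  by_contra h'
  push_neg at h'
  have hBp : (0:ℝ) < B + 1 := by linarith
  set t : ℝ := min (-A / (B + 1)) (1/2) with htdef
  have ht0 : 0 < t := lt_min (div_pos (by linarith) hBp) (by norm_num)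
  have ht1 : t < 1 := lt_of_le_of_lt (min_le_right _ _) (by norm_num)
  have hle : t ≤ -A / (B + 1) := min_le_left _ _
  have := h t ht0 ht1
  have h2 : t * B * t ≤ t * B * (-A / (B + 1)) :=
    mul_le_mul_of_nonneg_left hle (mul_nonneg ht0.le hB)
  have h3 : -A / (B + 1) * (B + 1) = -A := div_mul_cancel₀ _ (ne_of_gt hBp)
  nlinarith [mul_pos ht0 ht0]

lemma nw_expand {n p : ℕ} (X : Fin n → Fin p → ℝ) (g γ : Fin (p - 1) → ℝ) :
    sqNorm (nwRes X γ) = sqNorm (nwRes X g)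
      - 2 * ∑ i, nwRes X g i * (∑ j, X i (colIdx j) * (γ j - g j))
      + sqNorm (fun i => ∑ j, X i (colIdx j) * (γ j - g j)) := by
  have hres : ∀ i, nwRes X γ i = nwRes X g i - ∑ j, X i (colIdx j) * (γ j - g j) := by
    intro i
    simp only [nwRes, mul_sub, Finset.sum_sub_distrib]
    ring
  simp only [sqNorm, hres]
  rw [Finset.mul_sum, ← Finset.sum_sub_distrib, ← Finset.sum_add_distrib]
  exact Finset.sum_congr rfl fun i _ => by ring

lemma obj_ineq {n p : ℕ} (X : Fin n → Fin p → ℝ) (lam : ℝ) (g : Fin (p - 1) → ℝ)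
    (hsol : IsNodewiseSol X lam g) (γ : Fin (p - 1) → ℝ) :
    0 ≤ (1 / n) * sqNorm (fun i => ∑ j, X i (colIdx j) * (γ j - g j))
      - (2 / n) * ∑ i, nwRes X g i * (∑ j, X i (colIdx j) * (γ j - g j))
      + 2 * lam * (l1Norm γ - l1Norm g) := by
  have h := hsol γ
  rw [nwObj, nwObj, nw_expand X g γ] at h
  set S1 := sqNorm (nwRes X g)
  set S2 := ∑ i, nwRes X g i * (∑ j, X i (colIdx j) * (γ j - g j))
  set S3 := sqNorm (fun i => ∑ j, X i (colIdx j) * (γ j - g j))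
  have e : (1:ℝ)/n * (S1 - 2*S2 + S3) = (1/n)*S1 - (2/n)*S2 + (1/n)*S3 := by ring
  rw [e] at h
  linarith

lemma kkt_bound {n p : ℕ} (X : Fin n → Fin p → ℝ) (lam : ℝ) (g : Fin (p - 1) → ℝ)
    (hlam : 0 < lam) (hsol : IsNodewiseSol X lam g) (j : Fin (p - 1)) :
    |(1 / n) * ∑ i, X i (colIdx j) * nwRes X g i| ≤ lam := by
  set r := nwRes X g with hr
  set A : ℝ := (1 / n) * ∑ i, X i (colIdx j) * r i with hA
  set B : ℝ := (1 / n) * ∑ i, (X i (colIdx j)) ^ 2 with hB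
  have hBnn : 0 ≤ B := by
    apply mul_nonneg (by positivity)
    exact Finset.sum_nonneg fun i _ => sq_nonneg _
  have key : ∀ t : ℝ, 0 ≤ t ^ 2 * B - 2 * t * A + 2 * lam * (|g j + t| - |g j|) := by
    intro t
    have h := obj_ineq X lam g hsol (fun k => if k = j then g k + t else g k)
    have hd : ∀ i, (∑ k, X i (colIdx k) * ((if k = j then g k + t else g k) - g k))
        = X i (colIdx j) * t := by
      intro i
      rw [Finset.sum_eq_single j]
      · simp
      · intro k _ hk; simp [hk]
      · simp
    simp only [hd] at h
    have hsq : sqNorm (fun i : Fin n => X i (colIdx j) * t)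
        = (∑ i, (X i (colIdx j)) ^ 2) * t ^ 2 := by
      simp only [sqNorm, mul_pow, ← Finset.sum_mul]
    have hrd : ∑ i, r i * (X i (colIdx j) * t) = (∑ i, X i (colIdx j) * r i) * t := by
      rw [Finset.sum_mul]
      exact Finset.sum_congr rfl fun i _ => by ring
    have hl : l1Norm (fun k => if k = j then g k + t else g k) - l1Norm g
        = |g j + t| - |g j| := by
      rw [l1Norm, l1Norm, ← Finset.sum_sub_distrib, Finset.sum_eq_single j]
      · simp
      · intro k _ hk; simp [hk]
      · simp
    rw [hsq, hrd, hl] at h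
    have e : t ^ 2 * B - 2 * t * A + 2 * lam * (|g j + t| - |g j|)
        = (1 / n) * ((∑ i, (X i (colIdx j)) ^ 2) * t ^ 2)
          - (2 / n) * ((∑ i, X i (colIdx j) * r i) * t)
          + 2 * lam * (|g j + t| - |g j|) := by
      rw [hA, hB]; ring
    rw [e]; exact h
  rw [abs_le]
  constructor
  · have h1 : 0 ≤ 2 * lam + 2 * A := by
      apply small_t_lemma _ B hBnn
      intro t ht0 ht1
      have hk := key (-t)
      have habs : |g j + -t| - |g j| ≤ t := by
        calc |g j + -t| - |g j| ≤ |g j + -t - g j| := abs_sub_abs_le_abs_sub _ _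
        _ = t := by rw [show g j + -t - g j = -t by ring, abs_neg, abs_of_pos ht0]
      have hprod : 0 ≤ 2 * lam * (t - (|g j + -t| - |g j|)) :=
        mul_nonneg (by linarith) (by linarith)
      nlinarith
    linarith
  · have h1 : 0 ≤ 2 * lam - 2 * A := by
      apply small_t_lemma _ B hBnn
      intro t ht0 ht1
      have hk := key t
      have habs : |g j + t| - |g j| ≤ t := by
        calc |g j + t| - |g j| ≤ |g j + t - g j| := abs_sub_abs_le_abs_sub _ _
        _ = t := by rw [show g j + t - g j = t by ring, abs_of_pos ht0]
      have hprod : 0 ≤ 2 * lam * (t - (|g j + t| - |g j|)) :=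
        mul_nonneg (by linarith) (by linarith)
      nlinarith
    linarith

lemma kkt_scale {n p : ℕ} (X : Fin n → Fin p → ℝ) (lam : ℝ) (g : Fin (p - 1) → ℝ)
    (hsol : IsNodewiseSol X lam g) :
    lam * l1Norm g ≤ (1 / n) * ∑ i, nwRes X g i * (∑ k, X i (colIdx k) * g k) := by
  set r := nwRes X g with hr
  set s : Fin n → ℝ := fun i => ∑ k, X i (colIdx k) * g k with hs
  set A : ℝ := (2 / n) * (∑ i, r i * s i) - 2 * lam * l1Norm g with hA
  set B : ℝ := (1 / n) * sqNorm s with hB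
  have hBnn : 0 ≤ B := by
    apply mul_nonneg (by positivity)
    exact Finset.sum_nonneg fun i _ => sq_nonneg _
  have h1 : 0 ≤ A := by
    apply small_t_lemma _ B hBnn
    intro t ht0 ht1
    have h := obj_ineq X lam g hsol (fun k => (1 - t) * g k)
    have hd : ∀ i, (∑ k, X i (colIdx k) * ((1 - t) * g k - g k)) = -t * s i := by
      intro i
      rw [hs, Finset.mul_sum]
      exact Finset.sum_congr rfl fun k _ => by ring
    simp only [hd] at h
    have hsq : sqNorm (fun i : Fin n => -t * s i) = t ^ 2 * sqNorm s := by
      simp only [sqNorm, mul_pow, Finset.mul_sum]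
      exact Finset.sum_congr rfl fun i _ => by ring
    have hrd : ∑ i, r i * (-t * s i) = -t * ∑ i, r i * s i := by
      rw [Finset.mul_sum]
      exact Finset.sum_congr rfl fun i _ => by ring
    have hl : l1Norm (fun k => (1 - t) * g k) = (1 - t) * l1Norm g := by
      rw [l1Norm, l1Norm, Finset.mul_sum]
      refine Finset.sum_congr rfl fun k _ => ?_
      rw [abs_mul, abs_of_pos (by linarith : (0:ℝ) < 1 - t)]
    rw [hsq, hrd, hl] at h
    have e : t * A + t ^ 2 * B
        = (1 / n) * (t ^ 2 * sqNorm s) - (2 / n) * (-t * ∑ i, r i * s i)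
          + 2 * lam * ((1 - t) * l1Norm g - l1Norm g) := by
      rw [hA, hB]; ring
    rw [e]; exact h
  rw [hA] at h1
  have e2 : (∑ i, r i * s i) = ∑ i, r i * ∑ k, X i (colIdx k) * g k := rfl
  rw [← e2]
  have e3 : (2:ℝ)/n * ∑ i, r i * s i = 2 * (1/n * ∑ i, r i * s i) := by ring
  linarith

lemma theta_zero {n p : ℕ} (hp : 2 ≤ p) (X : Fin n → Fin p → ℝ) (lam : ℝ)
    (g : Fin (p - 1) → ℝ) :
    thetaHat X lam g ⟨0, by omega⟩ = 1 / tauHatSq X lam g := by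
  simp [thetaHat]

lemma theta_col {n p : ℕ} (X : Fin n → Fin p → ℝ) (lam : ℝ)
    (g : Fin (p - 1) → ℝ) (j : Fin (p - 1)) :
    thetaHat X lam g (colIdx j) = -(g j) / tauHatSq X lam g := by
  unfold thetaHat
  rw [dif_neg (by simp [colIdx])]
  congr 2

lemma col0_eq {n p : ℕ} (hp : 2 ≤ p) (X : Fin n → Fin p → ℝ) (i : Fin n) :
    col0 X i = X i ⟨0, by omega⟩ := by
  rw [col0, fstEntry, dif_pos (by omega : 0 < p)]

lemma Xtheta {n p : ℕ} (hp : 2 ≤ p) (X : Fin n → Fin p → ℝ) (lam : ℝ)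
    (g : Fin (p - 1) → ℝ) (i : Fin n) :
    ∑ k, X i k * thetaHat X lam g k = nwRes X g i / tauHatSq X lam g := by
  rw [sum_split hp, theta_zero hp]
  have h3 : ∑ j, X i (colIdx j) * thetaHat X lam g (colIdx j)
      = (∑ j, -(X i (colIdx j) * g j)) * (1 / tauHatSq X lam g) := by
    rw [Finset.sum_mul]
    exact Finset.sum_congr rfl fun j _ => by rw [theta_col]; ring
  rw [h3, nwRes, col0_eq hp]
  rw [Finset.sum_neg_distrib]
  ring

lemma row_eq {n p : ℕ} (hp : 2 ≤ p) (X : Fin n → Fin p → ℝ) (lam : ℝ)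
    (g : Fin (p - 1) → ℝ) (jj : Fin p) :
    ∑ k, sigmaHat X jj k * thetaHat X lam g k
      = ((1 / n) * ∑ i, X i jj * nwRes X g i) / tauHatSq X lam g := by
  calc ∑ k, sigmaHat X jj k * thetaHat X lam g k
      = (1 / n) * ∑ k, ∑ i, X i jj * (X i k * thetaHat X lam g k) := by
        rw [Finset.mul_sum]
        refine Finset.sum_congr rfl fun k _ => ?_
        rw [sigmaHat, mul_assoc, Finset.sum_mul]
        congr 1
        exact Finset.sum_congr rfl fun i _ => mul_assoc _ _ _
    _ = (1 / n) * ∑ i, X i jj * (∑ k, X i k * thetaHat X lam g k) := by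
        rw [Finset.sum_comm]
        congr 1
        exact Finset.sum_congr rfl fun i _ => (Finset.mul_sum _ _ _).symm
    _ = (1 / n) * ∑ i, X i jj * (nwRes X g i / tauHatSq X lam g) := by
        congr 1
        exact Finset.sum_congr rfl fun i _ => by rw [Xtheta hp]
    _ = ((1 / n) * ∑ i, X i jj * nwRes X g i) / tauHatSq X lam g := by
        have h4 : ∑ i, X i jj * (nwRes X g i / tauHatSq X lam g)
            = (∑ i, X i jj * nwRes X g i) / tauHatSq X lam g := by
          rw [Finset.sum_div]
          exact Finset.sum_congr rfl fun i _ => (mul_div_assoc _ _ _).symm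
        rw [h4, mul_div_assoc]

lemma omega_eq {n p : ℕ} (hp : 2 ≤ p) (X : Fin n → Fin p → ℝ) (lam : ℝ)
    (g : Fin (p - 1) → ℝ) :
    omegaHat X lam g = tauTildeSq X g / (tauHatSq X lam g) ^ 2 := by
  calc omegaHat X lam g
      = ∑ j, thetaHat X lam g j * ∑ k, sigmaHat X j k * thetaHat X lam g k := by
        rw [omegaHat]
        refine Finset.sum_congr rfl fun j _ => ?_
        rw [Finset.mul_sum]
        exact Finset.sum_congr rfl fun k _ => by ring
    _ = ∑ j, thetaHat X lam g j *
          (((1 / n) * ∑ i, X i j * nwRes X g i) / tauHatSq X lam g) := by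
        exact Finset.sum_congr rfl fun j _ => by rw [row_eq hp]
    _ = ∑ j, ((1 / n) * ∑ i, thetaHat X lam g j * (X i j * nwRes X g i))
          / tauHatSq X lam g := by
        refine Finset.sum_congr rfl fun j _ => ?_
        rw [← Finset.mul_sum]
        ring
    _ = ((1 / n) * ∑ j, ∑ i, thetaHat X lam g j * (X i j * nwRes X g i))
          / tauHatSq X lam g := by
        rw [Finset.mul_sum, Finset.sum_div]
    _ = ((1 / n) * ∑ i, ∑ j, thetaHat X lam g j * (X i j * nwRes X g i))
          / tauHatSq X lam g := by
        rw [Finset.sum_comm]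
    _ = ((1 / n) * ∑ i, nwRes X g i * (∑ k, X i k * thetaHat X lam g k))
          / tauHatSq X lam g := by
        congr 2
        refine Finset.sum_congr rfl fun i _ => ?_
        rw [Finset.mul_sum]
        exact Finset.sum_congr rfl fun j _ => by ring
    _ = ((1 / n) * ∑ i, (nwRes X g i) ^ 2 / tauHatSq X lam g) / tauHatSq X lam g := by
        congr 2
        exact Finset.sum_congr rfl fun i _ => by rw [Xtheta hp]; ring
    _ = tauTildeSq X g / (tauHatSq X lam g) ^ 2 := by
        rw [tauTildeSq, sqNorm, ← Finset.sum_div, ← mul_div_assoc, div_div, ← pow_two]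

lemma tauHat_eq {n p : ℕ} (X : Fin n → Fin p → ℝ) (lam : ℝ) (g : Fin (p - 1) → ℝ)
    (hlam : 0 < lam) (hsol : IsNodewiseSol X lam g) :
    (1 / n) * ∑ i, col0 X i * nwRes X g i = tauHatSq X lam g := by
  have hEq : (1 / n) * ∑ i, nwRes X g i * (∑ k, X i (colIdx k) * g k)
      = lam * l1Norm g := by
    refine le_antisymm ?_ (kkt_scale X lam g hsol)
    have hsw : (∑ i, nwRes X g i * ∑ k, X i (colIdx k) * g k)
        = ∑ k, g k * ∑ i, X i (colIdx k) * nwRes X g i := by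
      calc ∑ i, nwRes X g i * ∑ k, X i (colIdx k) * g k
          = ∑ i, ∑ k, g k * (X i (colIdx k) * nwRes X g i) := by
            refine Finset.sum_congr rfl fun i _ => ?_
            rw [Finset.mul_sum]
            exact Finset.sum_congr rfl fun k _ => by ring
        _ = ∑ k, ∑ i, g k * (X i (colIdx k) * nwRes X g i) := Finset.sum_comm
        _ = ∑ k, g k * ∑ i, X i (colIdx k) * nwRes X g i :=
            Finset.sum_congr rfl fun k _ => (Finset.mul_sum _ _ _).symm
    rw [hsw, Finset.mul_sum]
    have hr : lam * l1Norm g = ∑ k, lam * |g k| := by rw [l1Norm, Finset.mul_sum]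
    rw [hr]
    refine Finset.sum_le_sum fun k _ => ?_
    have hb := kkt_bound X lam g hlam hsol k
    calc (1 / (n:ℝ)) * (g k * ∑ i, X i (colIdx k) * nwRes X g i)
        = g k * ((1 / n) * ∑ i, X i (colIdx k) * nwRes X g i) := by ring
      _ ≤ |g k * ((1 / n) * ∑ i, X i (colIdx k) * nwRes X g i)| := le_abs_self _
      _ = |g k| * |(1 / n) * ∑ i, X i (colIdx k) * nwRes X g i| := abs_mul _ _
      _ ≤ |g k| * lam := mul_le_mul_of_nonneg_left hb (abs_nonneg _)
      _ = lam * |g k| := mul_comm _ _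
  have hcol : ∀ i, col0 X i = nwRes X g i + ∑ k, X i (colIdx k) * g k := by
    intro i
    simp only [nwRes]
    ring
  have e1 : ∑ i, col0 X i * nwRes X g i
      = ∑ i, (nwRes X g i) ^ 2 + ∑ i, nwRes X g i * ∑ k, X i (colIdx k) * g k := by
    rw [← Finset.sum_add_distrib]
    refine Finset.sum_congr rfl fun i _ => ?_
    rw [hcol i]
    ring
  have e2 : tauHatSq X lam g = (1 / n) * ∑ i, (nwRes X g i) ^ 2 + lam * l1Norm g := rfl
  rw [e1, mul_add, hEq, e2]

/-- the bias factor satisfies `f ≤ λ/τ̃`. -/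
theorem statement15 (n p : ℕ) (hn : 1 ≤ n) (hp : 2 ≤ p)
    (X : Fin n → Fin p → ℝ) (lam : ℝ) (hlam : 0 < lam)
    (g : Fin (p - 1) → ℝ) (hsol : IsNodewiseSol X lam g)
    (hτ : 0 < tauTildeSq X g) :
    biasFactor X lam g ≤ lam / Real.sqrt (tauTildeSq X g) := by
  have hL0 : 0 ≤ l1Norm g := Finset.sum_nonneg fun _ _ => abs_nonneg _
  have hT0 : 0 < tauHatSq X lam g := by
    have h1 : tauHatSq X lam g = tauTildeSq X g + lam * l1Norm g := rfl
    nlinarith [mul_nonneg hlam.le hL0]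
  have hsup : supNorm (biasVec X lam g) ≤ lam / tauHatSq X lam g := by
    haveI : Nonempty (Fin p) := ⟨⟨0, by omega⟩⟩
    apply ciSup_le
    intro jj
    by_cases h0 : jj.1 = 0
    · rcases jj with ⟨v, hv⟩
      simp only at h0
      subst h0
      have hb : biasVec X lam g ⟨0, hv⟩ = 0 := by
        have e : biasVec X lam g ⟨0, hv⟩
            = (∑ k, sigmaHat X ⟨0, hv⟩ k * thetaHat X lam g k) - 1 := by
          simp [biasVec]
        rw [e, row_eq hp]
        have e2 : (∑ i, X i (⟨0, hv⟩ : Fin p) * nwRes X g i)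
            = ∑ i, col0 X i * nwRes X g i :=
          Finset.sum_congr rfl fun i _ => by rw [col0_eq hp]
        rw [e2, tauHat_eq X lam g hlam hsol, div_self hT0.ne', sub_self]
      rw [hb, abs_zero]
      positivity
    · set j' : Fin (p - 1) := ⟨jj.1 - 1, by have := jj.isLt; omega⟩ with hj'
      have hcj : colIdx j' = jj := by
        apply Fin.ext
        simp only [colIdx, hj']
        omega
      have hb : biasVec X lam g jj
          = ((1 / n) * ∑ i, X i jj * nwRes X g i) / tauHatSq X lam g := by
        have e : biasVec X lam g jj
            = (∑ k, sigmaHat X jj k * thetaHat X lam g k) - 0 := by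
          simp [biasVec, h0]
        rw [e, row_eq hp, sub_zero]
      rw [hb, ← hcj, abs_div, abs_of_pos hT0]
      gcongr
      exact kkt_bound X lam g hlam hsol j'
  have hs0 : 0 < Real.sqrt (tauTildeSq X g) := Real.sqrt_pos.mpr hτ
  have hsq : Real.sqrt (omegaHat X lam g)
      = Real.sqrt (tauTildeSq X g) / tauHatSq X lam g := by
    rw [omega_eq hp, Real.sqrt_div hτ.le, Real.sqrt_sq hT0.le]
  have hden : 0 < Real.sqrt (omegaHat X lam g) := by
    rw [hsq]
    positivity
  rw [biasFactor, hsq]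
  have step1 : supNorm (biasVec X lam g) / (Real.sqrt (tauTildeSq X g) / tauHatSq X lam g)
      ≤ (lam / tauHatSq X lam g) / (Real.sqrt (tauTildeSq X g) / tauHatSq X lam g) := by
    gcongr
  refine step1.trans (le_of_eq ?_)
  field_simp


end
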